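/- Let P ∈ ℝ^{n×n} be symmetric positive definite with factorization P = L_P L_Pᵀ, let 0 ≤ τ < 1, and let λ > (1−τ)‖P‖ where ‖P‖ is the spectral norm. Then the matrix I_n − ((1−τ)/λ) L_Pᵀ L_P is symmetric positive definite, and the matrix P̃ = L_P (I_n − ((1−τ)/λ) L_Pᵀ L_P)^{1/(τ−1)} L_Pᵀ is symmetric positive definite and satisfies P̃ − P positive definite. -/

import Mathlib

open Matrix

noncomputable def matFun {n : ℕ} (A : Matrix (Fin n) (Fin n) ℝ) (f : ℝ → ℝ) :
    Matrix (Fin n) (Fin n) ℝ :=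
  if h : A.IsHermitian then
    (h.eigenvectorUnitary : Matrix (Fin n) (Fin n) ℝ) *
      Matrix.diagonal (fun i => f (h.eigenvalues i)) *
      star (h.eigenvectorUnitary : Matrix (Fin n) (Fin n) ℝ)
  else 0

noncomputable def specNorm {n : ℕ} (A : Matrix (Fin n) (Fin n) ℝ) : ℝ :=
  if h : A.IsHermitian then ⨆ i, h.eigenvalues i else 0


lemma auxConjT {m : Type*} [Fintype m] [DecidableEq m]
    {N : Matrix m m ℝ} (hN : N.PosDef) (B : Matrix m m ℝ) (hB : IsUnit B) :
    (Bᴴ * N * B).PosDef := by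
  refine PosDef.of_dotProduct_mulVec_pos (isHermitian_conjTranspose_mul_mul B hN.1) fun x hx => ?_
  have hBi : Function.Injective B.mulVec := mulVec_injective_iff_isUnit.2 hB
  have hx' : B *ᵥ x ≠ 0 := fun h => hx (hBi (by rw [h, mulVec_zero]))
  simpa only [star_mulVec, dotProduct_mulVec, vecMul_vecMul] using hN.dotProduct_mulVec_pos hx'

lemma auxConj {m : Type*} [Fintype m] [DecidableEq m]
    {N : Matrix m m ℝ} (hN : N.PosDef) (B : Matrix m m ℝ) (hB : IsUnit B) :
    (B * N * Bᴴ).PosDef := by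
  have hBH : IsUnit Bᴴ := by
    rw [isUnit_iff_isUnit_det] at hB ⊢
    rwa [det_conjTranspose, star_trivial]
  simpa only [conjTranspose_conjTranspose] using auxConjT hN Bᴴ hBH

lemma auxEigMem {m : Type*} [Fintype m] [DecidableEq m]
    {A : Matrix m m ℝ} (hA : A.IsHermitian)
    {v : m → ℝ} (hv : v ≠ 0) {μ : ℝ} (hmul : A *ᵥ v = μ • v) :
    ∃ i, hA.eigenvalues i = μ := by
  have hndet : ¬ IsUnit (A - μ • (1 : Matrix m m ℝ)) := by
    intro h
    apply hv
    apply mulVec_injective_iff_isUnit.2 h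
    rw [mulVec_zero, sub_mulVec, hmul, smul_mulVec, one_mulVec, sub_self]
  set U : Matrix m m ℝ := (hA.eigenvectorUnitary : Matrix m m ℝ) with hUdef
  have hU : U * star U = 1 := mem_unitaryGroup_iff.mp hA.eigenvectorUnitary.2
  have hkey : A - μ • (1 : Matrix m m ℝ)
      = U * diagonal (fun i => hA.eigenvalues i - μ) * star U := by
    have hdiag : diagonal (fun i => hA.eigenvalues i - μ)
        = diagonal (RCLike.ofReal ∘ hA.eigenvalues) - μ • (1 : Matrix m m ℝ) := by
      rw [smul_one_eq_diagonal, ← diagonal_sub]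
      rfl
    have hst := hA.spectral_theorem
    simp only [Unitary.conjStarAlgAut_apply] at hst
    rw [hdiag, mul_sub, sub_mul, ← hst]
    congr 1
    rw [mul_smul_comm, smul_mul_assoc, mul_one, hU]
  have hdet0 : det (A - μ • (1 : Matrix m m ℝ)) = 0 := by
    by_contra h
    exact hndet ((isUnit_iff_isUnit_det _).2 (isUnit_iff_ne_zero.2 h))
  rw [hkey, det_mul, det_mul, det_diagonal] at hdet0
  have hUdet : det U * det (star U) = 1 := by rw [← det_mul, hU, det_one]
  have : ∏ i, (hA.eigenvalues i - μ) = 0 := by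
    rcases mul_eq_zero.mp hdet0 with h | h
    · rcases mul_eq_zero.mp h with h' | h'
      · exfalso
        have := hUdet
        rw [h', zero_mul] at this
        exact zero_ne_one this
      · exact h'
    · exfalso
      have := hUdet
      rw [h, mul_zero] at this
      exact zero_ne_one this
  obtain ⟨i, _, hi⟩ := Finset.prod_eq_zero_iff.mp this
  exact ⟨i, by linarith [sub_eq_zero.mp hi]⟩

lemma auxPosDefOfEig {m : Type*} [Fintype m] [DecidableEq m]
    {A : Matrix m m ℝ} (hA : A.IsHermitian)
    (h : ∀ i, 0 < hA.eigenvalues i) : A.PosDef := by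
  rw [hA.spectral_theorem]
  have hUunit : IsUnit (hA.eigenvectorUnitary : Matrix m m ℝ) :=
    isUnit_iff_exists.2 ⟨star (hA.eigenvectorUnitary : Matrix m m ℝ),
      mem_unitaryGroup_iff.mp hA.eigenvectorUnitary.2,
      mem_unitaryGroup_iff'.mp hA.eigenvectorUnitary.2⟩
  exact auxConj (posDef_diagonal_iff.2 (by simpa using h)) _ hUunit

/-- Least favorable error covariance, case `0 ≤ τ < 1`:  with `P = L_P L_Pᵀ`
positive definite and `λ > (1−τ)‖P‖`, the matrix `I − ((1−τ)/λ) L_Pᵀ L_P` is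
positive definite, and `P̃ = L_P (I − ((1−τ)/λ) L_Pᵀ L_P)^{1/(τ−1)} L_Pᵀ` is
positive definite with `P̃ − P` positive definite. -/
theorem least_favorable_cov_posdef {n : ℕ} (P L : Matrix (Fin n) (Fin n) ℝ)
    (hfac : P = L * Lᵀ) (hP : P.PosDef) (τ : ℝ) (hτ0 : 0 ≤ τ) (hτ1 : τ < 1)
    (lam : ℝ) (hlam : (1 - τ) * specNorm P < lam) :
    ((1 : Matrix (Fin n) (Fin n) ℝ) - ((1 - τ) / lam) • (Lᵀ * L)).PosDef ∧
    (L * matFun ((1 : Matrix (Fin n) (Fin n) ℝ) - ((1 - τ) / lam) • (Lᵀ * L))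
        (fun x => x ^ (1 / (τ - 1))) * Lᵀ).PosDef ∧
    (L * matFun ((1 : Matrix (Fin n) (Fin n) ℝ) - ((1 - τ) / lam) • (Lᵀ * L))
        (fun x => x ^ (1 / (τ - 1))) * Lᵀ - P).PosDef := by
  have hτ' : 0 < 1 - τ := by linarith
  have hdetP : 0 < P.det := hP.det_pos
  have hLdet : L.det ≠ 0 := by
    intro h
    rw [hfac, det_mul, h, zero_mul] at hdetP
    exact lt_irrefl _ hdetP
  have hLunit : IsUnit L := (Matrix.isUnit_iff_isUnit_det _).2 (isUnit_iff_ne_zero.2 hLdet)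
  have hsN : specNorm P = ⨆ i, hP.1.eigenvalues i := by rw [specNorm, dif_pos hP.1]
  have hs0 : 0 ≤ specNorm P := by
    rw [hsN]
    rcases isEmpty_or_nonempty (Fin n) with hE | hNE
    · rw [Real.iSup_of_isEmpty]
    · obtain ⟨i⟩ := hNE
      exact le_trans (hP.eigenvalues_pos i).le
        (le_ciSup (Set.Finite.bddAbove (Set.finite_range _)) i)
  have hlam0 : 0 < lam := lt_of_le_of_lt (by positivity) hlam
  set c : ℝ := (1 - τ) / lam with hc
  have hc0 : 0 < c := div_pos hτ' hlam0
  set B : Matrix (Fin n) (Fin n) ℝ := Lᵀ * L with hBdef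
  have hBh : B.IsHermitian := by
    have := isHermitian_conjTranspose_mul_self L
    rwa [conjTranspose_eq_transpose_of_trivial] at this
  have hAh : ((1 : Matrix (Fin n) (Fin n) ℝ) - c • B).IsHermitian := by
    show ((1 : Matrix (Fin n) (Fin n) ℝ) - c • B)ᴴ = _
    rw [conjTranspose_sub, conjTranspose_one, conjTranspose_smul, star_trivial, hBh.eq]
  -- eigenvalues of A are in (0,1)
  have heig : ∀ i, 0 < hAh.eigenvalues i ∧ hAh.eigenvalues i < 1 := by
    intro i
    set α := hAh.eigenvalues i with hα
    set v : Fin n → ℝ := ⇑(hAh.eigenvectorBasis i) with hv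
    have hvne : v ≠ 0 := by
      intro h
      apply hAh.eigenvectorBasis.orthonormal.ne_zero i
      ext j
      exact congrFun h j
    have hAv : ((1 : Matrix (Fin n) (Fin n) ℝ) - c • B) *ᵥ v = α • v :=
      hAh.mulVec_eigenvectorBasis i
    set μ : ℝ := (1 - α) / c with hμ
    have hBv : B *ᵥ v = μ • v := by
      have h1 : v - c • (B *ᵥ v) = α • v := by
        rw [← hAv, sub_mulVec, one_mulVec, smul_mulVec]
      have h2 : c • (B *ᵥ v) = (1 - α) • v := by
        rw [sub_smul, one_smul, ← h1]
        abel
      have h3 : B *ᵥ v = c⁻¹ • ((1 - α) • v) := by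
        rw [← h2, smul_smul, inv_mul_cancel₀ (ne_of_gt hc0), one_smul]
      rw [h3, smul_smul, hμ, div_eq_inv_mul]
    set w : Fin n → ℝ := L *ᵥ v with hw
    have hwne : w ≠ 0 := by
      intro h
      apply hvne
      apply mulVec_injective_iff_isUnit.2 hLunit
      show L *ᵥ v = L *ᵥ 0
      rw [mulVec_zero, ← hw, h]
    have hPw : P *ᵥ w = μ • w := by
      rw [hfac, hw, mulVec_mulVec, mul_assoc, ← hBdef, ← mulVec_mulVec, hBv,
        mulVec_smul]
    have hww : 0 < w ⬝ᵥ w := by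
      have := dotProduct_star_self_pos_iff (v := w).2 hwne
      simpa using this
    have hμpos : 0 < μ := by
      have h2 := hP.dotProduct_mulVec_pos hwne
      rw [hPw] at h2
      have h3 : (0:ℝ) < μ * (w ⬝ᵥ w) := by
        simpa [dotProduct_smul, smul_eq_mul] using h2
      nlinarith
    have hμle : μ ≤ specNorm P := by
      obtain ⟨j, hj⟩ := auxEigMem hP.1 hwne hPw
      rw [hsN, ← hj]
      exact le_ciSup (Set.Finite.bddAbove (Set.finite_range _)) j
    have hcμ : c * μ = 1 - α := by
      rw [hμ, mul_div_cancel₀ _ (ne_of_gt hc0)]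
    have hcμlt : c * μ < 1 := by
      rw [hc, div_mul_eq_mul_div, div_lt_one hlam0]
      nlinarith
    constructor
    · linarith
    · nlinarith
  have hApos : ((1 : Matrix (Fin n) (Fin n) ℝ) - c • B).PosDef :=
    auxPosDefOfEig hAh fun i => (heig i).1
  set U : Matrix (Fin n) (Fin n) ℝ := (hAh.eigenvectorUnitary : Matrix (Fin n) (Fin n) ℝ)
    with hUdef
  have hUmul : U * star U = 1 := mem_unitaryGroup_iff.mp hAh.eigenvectorUnitary.2
  have hUunit : IsUnit U := isUnit_iff_exists.2 ⟨star U,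
    mem_unitaryGroup_iff.mp hAh.eigenvectorUnitary.2,
    mem_unitaryGroup_iff'.mp hAh.eigenvectorUnitary.2⟩
  have hMF : matFun ((1 : Matrix (Fin n) (Fin n) ℝ) - c • B) (fun x => x ^ (1 / (τ - 1)))
      = U * diagonal (fun i => (hAh.eigenvalues i) ^ (1 / (τ - 1))) * star U := by
    rw [matFun, dif_pos hAh]
  have he : (1 : ℝ) / (τ - 1) < 0 := by
    apply div_neg_of_pos_of_neg one_pos
    linarith
  have hfpos : ∀ i, 0 < (hAh.eigenvalues i) ^ (1 / (τ - 1)) := fun i =>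
    Real.rpow_pos_of_pos (heig i).1 _
  have hfgt1 : ∀ i, 1 < (hAh.eigenvalues i) ^ (1 / (τ - 1)) := fun i => by
    rw [Real.one_lt_rpow_iff_of_pos (heig i).1]
    exact Or.inr ⟨(heig i).2, he⟩
  have hLT : Lᴴ = Lᵀ := conjTranspose_eq_transpose_of_trivial L
  have hmid : (U * diagonal (fun i => (hAh.eigenvalues i) ^ (1 / (τ - 1))) * star U).PosDef := by
    have hD := posDef_diagonal_iff.2 hfpos
    have := auxConj hD U hUunit
    rwa [← star_eq_conjTranspose] at this
  have hmid' : (U * diagonal (fun i => (hAh.eigenvalues i) ^ (1 / (τ - 1)) - 1)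
      * star U).PosDef := by
    have hD := posDef_diagonal_iff.2 fun i => sub_pos.2 (hfgt1 i)
    have := auxConj hD U hUunit
    rwa [← star_eq_conjTranspose] at this
  refine ⟨hApos, ?_, ?_⟩
  · rw [hMF]
    have := auxConj hmid L hLunit
    rwa [hLT] at this
  · have hsplit : L * (U * diagonal (fun i => (hAh.eigenvalues i) ^ (1 / (τ - 1))) * star U)
        * Lᵀ - P
        = L * (U * diagonal (fun i => (hAh.eigenvalues i) ^ (1 / (τ - 1)) - 1) * star U) * Lᵀ := by
      have h1 : U * diagonal (fun i => (hAh.eigenvalues i) ^ (1 / (τ - 1)) - 1) * star U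
          = U * diagonal (fun i => (hAh.eigenvalues i) ^ (1 / (τ - 1))) * star U - 1 := by
        have hdd : diagonal (fun i => (hAh.eigenvalues i) ^ (1 / (τ - 1)) - 1)
            = diagonal (fun i => (hAh.eigenvalues i) ^ (1 / (τ - 1)))
              - (1 : Matrix (Fin n) (Fin n) ℝ) := by
          ext i j
          rcases eq_or_ne i j with rfl | h
          · simp
          · simp [Matrix.diagonal_apply_ne _ h, Matrix.one_apply_ne h]
        rw [hdd, mul_sub, sub_mul, mul_one, hUmul]
      rw [h1, mul_sub, sub_mul, mul_one, hfac]
    rw [hMF, hsplit]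
    have := auxConj hmid' L hLunit
    rwa [hLT] at this
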